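/- Every middle-exact functor between abelian categories is additive, where a functor T is middle-exact if for every short exact sequence 0 → A → B → C → 0 the sequence T(A) → T(B) → T(C) is exact. -/
import Mathlib


open CategoryTheory Limits CategoryTheory.Preadditive

universe v₁ v₂ u₁ u₂

/-- **Middle-exact functors are additive.**
A functor `T` between abelian categories is *middle-exact* if for every short exact
sequence `0 → A → B → C → 0`, the (not a priori zero-composable, but in fact
zero-composable) sequence `T(A) → T(B) → T(C)` is exact.  Every middle-exact
functor is additive. -/
theorem middleExact_functor_additive {C : Type u₁} {D : Type u₂}
    [Category.{v₁} C] [Category.{v₂} D] [Abelian C] [Abelian D] (T : C ⥤ D)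
    (hT : ∀ S : ShortComplex C, S.ShortExact →
      ∃ w : T.map S.f ≫ T.map S.g = 0, (ShortComplex.mk (T.map S.f) (T.map S.g) w).Exact) :
    T.Additive := by
  classical
  open ZeroObject in
  -- Step 1: `T` sends zero morphisms to zero morphisms.
  have hz : ∀ (A B : C), T.map (0 : A ⟶ B) = 0 := by
    have h1 : ∀ A : C, T.map (0 : A ⟶ (0 : C)) = 0 := by
      intro A
      have hepi : Epi (0 : A ⟶ (0 : C)) :=
        ⟨fun h h' _ => (isZero_zero C).eq_of_src h h'⟩
      obtain ⟨w, -⟩ := hT (ShortComplex.mk (𝟙 A) (0 : A ⟶ (0 : C)) (by simp))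
        (ShortComplex.ShortExact.mk'
          ((ShortComplex.Splitting.ofIsIsoOfIsZero _ (by infer_instance)
            (isZero_zero C)).exact) (by infer_instance) hepi)
      simpa using w
    have h2 : ∀ B : C, T.map (0 : (0 : C) ⟶ B) = 0 := by
      intro B
      have hmono : Mono (0 : (0 : C) ⟶ B) :=
        ⟨fun h h' _ => (isZero_zero C).eq_of_tgt h h'⟩
      obtain ⟨w, -⟩ := hT (ShortComplex.mk (0 : (0 : C) ⟶ B) (𝟙 B) (by simp))
        (ShortComplex.ShortExact.mk'
          ((ShortComplex.Splitting.ofIsZeroOfIsIso _ (isZero_zero C)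
            (by infer_instance)).exact) hmono (by infer_instance))
      simpa using w
    intro A B
    have : (0 : A ⟶ B) = (0 : A ⟶ (0 : C)) ≫ (0 : (0 : C) ⟶ B) := by simp
    rw [this, T.map_comp, h1, zero_comp]
  -- Step 2: the "total" identity for the image of a biproduct.
  have htot : ∀ (A B : C),
      T.map (biprod.fst : A ⊞ B ⟶ A) ≫ T.map (biprod.inl : A ⟶ A ⊞ B) +
        T.map (biprod.snd : A ⊞ B ⟶ B) ≫ T.map (biprod.inr : B ⟶ A ⊞ B) =
        𝟙 (T.obj (A ⊞ B)) := by
    intro A B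
    obtain ⟨w, hex⟩ := hT (ShortComplex.mk (biprod.inl : A ⟶ A ⊞ B)
        (biprod.snd : A ⊞ B ⟶ B) (by simp))
      (ShortComplex.ShortExact.mk' ((ShortComplex.Splitting.ofHasBinaryBiproduct A B).exact)
        (by infer_instance) (by infer_instance))
    -- `T.map biprod.inl` is a split mono
    have hil : T.map (biprod.inl : A ⟶ A ⊞ B) ≫ T.map (biprod.fst : A ⊞ B ⟶ A) = 𝟙 _ := by
      rw [← T.map_comp, biprod.inl_fst, T.map_id]
    have hir : T.map (biprod.inr : B ⟶ A ⊞ B) ≫ T.map (biprod.snd : A ⊞ B ⟶ B) = 𝟙 _ := by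
      rw [← T.map_comp, biprod.inr_snd, T.map_id]
    haveI : Mono (T.map (biprod.inl : A ⟶ A ⊞ B)) :=
      ⟨fun h h' e => by
        have := congrArg (· ≫ T.map (biprod.fst : A ⊞ B ⟶ A)) e
        simpa [Category.assoc, hil] using this⟩
    set φ : T.obj (A ⊞ B) ⟶ T.obj (A ⊞ B) :=
      𝟙 (T.obj (A ⊞ B)) - T.map (biprod.fst : A ⊞ B ⟶ A) ≫ T.map (biprod.inl : A ⟶ A ⊞ B)
        - T.map (biprod.snd : A ⊞ B ⟶ B) ≫ T.map (biprod.inr : B ⟶ A ⊞ B) with hφ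
    have hφsnd : φ ≫ T.map (biprod.snd : A ⊞ B ⟶ B) = 0 := by
      have h0 : T.map (biprod.inl : A ⟶ A ⊞ B) ≫ T.map (biprod.snd : A ⊞ B ⟶ B) = 0 := by
        rw [← T.map_comp, biprod.inl_snd, hz]
      simp [hφ, sub_comp, Category.assoc, h0, hir]
    have hφfst : φ ≫ T.map (biprod.fst : A ⊞ B ⟶ A) = 0 := by
      have h0 : T.map (biprod.inr : B ⟶ A ⊞ B) ≫ T.map (biprod.fst : A ⊞ B ⟶ A) = 0 := by
        rw [← T.map_comp, biprod.inr_fst, hz]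
      simp [hφ, sub_comp, Category.assoc, h0, hil]
    -- By exactness, `φ` factors through `T.map biprod.inl`; compose with `T.map biprod.fst`.
    have hfac := hex.lift_f φ hφsnd
    have hψ : hex.lift φ hφsnd = 0 := by
      have := congrArg (· ≫ T.map (biprod.fst : A ⊞ B ⟶ A)) hfac
      simpa [Category.assoc, hil, hφfst] using this
    have : φ = 0 := by rw [← hfac, hψ, zero_comp]
    rw [hφ, sub_sub, sub_eq_zero] at this
    exact this.symm
  -- Step 3: additivity.
  refine ⟨@fun X Y f g => ?_⟩
  have key : f + g = biprod.lift (𝟙 X) (𝟙 X) ≫ biprod.desc f g := by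
    simp [biprod.lift_desc]
  rw [key, T.map_comp]
  conv_lhs => rw [← Category.id_comp (T.map (biprod.desc f g)), ← htot X X]
  rw [add_comp, comp_add]
  have e1 : T.map (biprod.lift (𝟙 X) (𝟙 X)) ≫ T.map (biprod.fst : X ⊞ X ⟶ X) = 𝟙 _ := by
    rw [← T.map_comp]; simp
  have e2 : T.map (biprod.lift (𝟙 X) (𝟙 X)) ≫ T.map (biprod.snd : X ⊞ X ⟶ X) = 𝟙 _ := by
    rw [← T.map_comp]; simp
  have e3 : T.map (biprod.inl : X ⟶ X ⊞ X) ≫ T.map (biprod.desc f g) = T.map f := by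
    rw [← T.map_comp]; simp
  have e4 : T.map (biprod.inr : X ⟶ X ⊞ X) ≫ T.map (biprod.desc f g) = T.map g := by
    rw [← T.map_comp]; simp
  simp only [← Category.assoc, e1, e2]
  simp only [Category.id_comp, Category.assoc, e3, e4]
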